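/- Let G be a finite simple graph in which every vertex has degree exactly 3, with n = |V(G)| = 2^m for some m ≥ 1, let k be an integer with 1 < k < n−1, and let G' (with weights, β, α and k' as specified) be the associated gadget graph. Let H be the subgraph of G' induced by V(T_1) ∪ D, where D ⊆ {v_1 : v ∈ V(G)} ∪ {v_{g1} : v ∈ V(G)}; the vertices of D are called dangling. If no two dangling vertices are adjacent in G', then wtd(H) = α + w*, where w* is the maximum weight of a dangling vertex (w* = 0 if D is empty). -/

import Mathlib

/-- A treedepth decomposition of a simple graph `G`: a partial order `le` on the
vertices such that the set of elements below any vertex is linearly ordered, and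
the endpoints of every edge are comparable. -/
structure TDDecomp {V : Type*} (G : SimpleGraph V) where
  le : V → V → Prop
  le_refl : ∀ x, le x x
  le_antisymm : ∀ x y, le x y → le y x → x = y
  le_trans : ∀ x y z, le x y → le y z → le x z
  down_linear : ∀ x y z, le y x → le z x → le y z ∨ le z y
  adj_comparable : ∀ u v, G.Adj u v → le u v ∨ le v u

/-- A chain of a treedepth decomposition: a finite set of pairwise comparable vertices. -/
def TDDecomp.IsChain {V : Type*} {G : SimpleGraph V} (T : TDDecomp G) (C : Finset V) : Prop :=
  ∀ x ∈ C, ∀ y ∈ C, T.le x y ∨ T.le y x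

/-- The weighted depth of a treedepth decomposition: the maximum over all chains `C`
of the total weight of `C`. -/
noncomputable def TDDecomp.weightedDepth {V : Type*} {G : SimpleGraph V}
    (T : TDDecomp G) (w : V → ℕ) : ℕ :=
  sSup {s | ∃ C : Finset V, T.IsChain C ∧ s = C.sum w}

/-- The weighted treedepth of `G` with weight function `w`: the minimum weighted depth
over all treedepth decompositions of `G`. -/
noncomputable def wtd {V : Type*} (G : SimpleGraph V) (w : V → ℕ) : ℕ :=
  sInf {s | ∃ T : TDDecomp G, s = T.weightedDepth w}

/-- Vertices of the gadget graph `G'` built from a cubic graph `G` on `2^m` vertices: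
`copy v i` is `v_{i+1}` (the two copies `v_1, v_2` of `v`), `guard v i` is `v_{g(i+1)}`
(the three vertices `v_{g1}, v_{g2}, v_{g3}`), and `tree t i j` is the `j`-th vertex at
depth `i` of the complete binary tree `T_{t+1}` (depth `m` vertices are the `2^m` leaves). -/
inductive GadgetV (V : Type*) (m : ℕ) where
  | copy : V → Fin 2 → GadgetV V m
  | guard : V → Fin 3 → GadgetV V m
  | tree : Fin 3 → (i : Fin (m + 1)) → Fin (2 ^ i.val) → GadgetV V m

/-- The base relation generating the edges of `G'` (for `e : V ≃ Fin (2^m)` the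
identification of `V(G)` with the leaves of each tree):
copies of adjacent vertices are adjacent (`u_1v_1, u_2v_2, u_1v_2, u_2v_1`);
each `v_{gi}` is adjacent to `v_1` and `v_2`; consecutive levels of each complete
binary tree `T_t` are joined (child `j'` at depth `i+1` to parent `j'/2` at depth `i`);
and `v_1, v_{g1}` are joined to the leaf `v_{t_1}` of `T_1`, `v_2, v_{g2}` to the leaf
`v_{t_2}` of `T_2`, and `v_{g3}` to the leaf `v_{t_3}` of `T_3`. -/
def gadgetRel {V : Type*} {m : ℕ} (G : SimpleGraph V) (e : V ≃ Fin (2 ^ m)) :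
    GadgetV V m → GadgetV V m → Prop
  | .copy u _, .copy v _ => G.Adj u v
  | .copy u _, .guard v _ => u = v
  | .copy u i, .tree t d j => (t : ℕ) = (i : ℕ) ∧ (d : ℕ) = m ∧ (j : ℕ) = (e u : ℕ)
  | .guard u i, .tree t d j => (t : ℕ) = (i : ℕ) ∧ (d : ℕ) = m ∧ (j : ℕ) = (e u : ℕ)
  | .tree t d j, .tree t' d' j' => t = t' ∧ (d : ℕ) + 1 = (d' : ℕ) ∧ (j' : ℕ) / 2 = (j : ℕ)
  | _, _ => False

/-- The gadget graph `G'`. -/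
def gadget {V : Type*} {m : ℕ} (G : SimpleGraph V) (e : V ≃ Fin (2 ^ m)) :
    SimpleGraph (GadgetV V m) :=
  SimpleGraph.fromRel (gadgetRel G e)

/-- The weight function of `G'` (with parameter `β`): copies `v_1, v_2` have weight `2`,
the `v_{gi}` have weight `1`, and a tree vertex at depth `i` has weight `β + 3i`. -/
def gadgetW {V : Type*} {m : ℕ} (β : ℕ) : GadgetV V m → ℕ
  | .copy _ _ => 2
  | .guard _ _ => 1
  | .tree _ i _ => β + 3 * (i : ℕ)

namespace S14

variable {V : Type*} {m : ℕ}

def gfin : GadgetV V m → (V × Fin 2) ⊕ (V × Fin 3) ⊕ (Fin 3 × Σ i : Fin (m+1), Fin (2^i.val))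
  | .copy v i => .inl (v, i)
  | .guard v i => .inr (.inl (v, i))
  | .tree t i j => .inr (.inr (t, ⟨i, j⟩))

instance [Finite V] : Finite (GadgetV V m) := by
  apply Finite.of_injective gfin
  intro x y h
  cases x <;> cases y <;> simp [gfin, Sigma.mk.inj_iff] at h
  · obtain ⟨rfl, rfl⟩ := h; rfl
  · obtain ⟨rfl, rfl⟩ := h; rfl
  · obtain ⟨rfl, rfl, h2⟩ := h
    cases eq_of_heq h2; rfl

lemma div_div_pow (a p q : ℕ) : a / 2^p / 2^q = a / 2^(p+q) := by
  rw [Nat.div_div_eq_div_mul, pow_add]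

lemma div_cascade {X a b : ℕ} (J : ℕ) (hab : a ≤ b) (hbX : b ≤ X) :
    J / 2 ^ (X - b) / 2 ^ (b - a) = J / 2 ^ (X - a) := by
  rw [div_div_pow]
  have h3 : X - b + (b - a) = X - a := by omega
  rw [h3]

lemma div_pow_lt {a i X : ℕ} (ha : a < 2^X) (h : i ≤ X) : a / 2^(X-i) < 2^i := by
  rw [Nat.div_lt_iff_lt_mul (Nat.pow_pos two_pos), ← pow_add]
  have h3 : i + (X - i) = X := by omega
  rw [h3]; exact ha

def tv (i j : ℕ) (hi : i ≤ m) (hj : j < 2^i) : GadgetV V m :=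
  .tree 0 ⟨i, Nat.lt_succ_of_le hi⟩ ⟨j, hj⟩

lemma tv_inj {i j i' j' : ℕ} {hi hj hi' hj'}
    (h : (tv i j hi hj : GadgetV V m) = tv i' j' hi' hj') : i = i' ∧ j = j' := by
  simp only [tv, GadgetV.tree.injEq, true_and] at h
  obtain ⟨h1, h2⟩ := h
  have hii : i = i' := by simpa using congrArg Fin.val h1
  subst hii
  refine ⟨rfl, ?_⟩
  simpa using congrArg Fin.val (eq_of_heq h2)

lemma tv_inj' (i j i' j' : ℕ) (hi : i ≤ m) (hj : j < 2^i) (hi' : i' ≤ m) (hj' : j' < 2^i')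
    (h : (tv i j hi hj : GadgetV V m) = tv i' j' hi' hj') : i = i' ∧ j = j' :=
  tv_inj h

lemma gadgetW_tv (β i j : ℕ) (hi : i ≤ m) (hj : j < 2^i) :
    gadgetW β (tv (V := V) i j hi hj) = β + 3 * i := rfl


def HSet (D : Set (GadgetV V m)) : Set (GadgetV V m) :=
  {x | ∃ (i : Fin (m + 1)) (j : Fin (2 ^ i.val)), x = GadgetV.tree 0 i j} ∪ D

variable (G : SimpleGraph V) (e : V ≃ Fin (2 ^ m)) (D : Set (GadgetV V m))

abbrev HG : SimpleGraph ↥(HSet D) := SimpleGraph.induce (HSet D) (gadget G e)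

lemma tv_memHS (i j : ℕ) (hi : i ≤ m) (hj : j < 2^i) : (tv i j hi hj : GadgetV V m) ∈ HSet D :=
  Or.inl ⟨_, _, rfl⟩

def vt (i j : ℕ) (hi : i ≤ m) (hj : j < 2^i) : ↥(HSet D) :=
  ⟨tv i j hi hj, tv_memHS D i j hi hj⟩

lemma HG_adj {a b : ↥(HSet D)} :
    (HG G e D).Adj a b ↔ (a : GadgetV V m) ≠ b ∧
      (gadgetRel G e a b ∨ gadgetRel G e b a) := by
  constructor
  · intro h
    exact (SimpleGraph.fromRel_adj _ _ _).1 h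
  · intro h
    exact (SimpleGraph.fromRel_adj (gadgetRel G e) a.1 b.1).2
      ⟨fun hc => h.1 hc, h.2⟩

lemma adj_parent {i j i' j' : ℕ} (hi : i ≤ m) (hj : j < 2^i) (hi' : i' ≤ m) (hj' : j' < 2^i')
    (hstep : i + 1 = i') (hpar : j' / 2 = j) :
    (HG G e D).Adj (vt D i' j' hi' hj') (vt D i j hi hj) := by
  rw [HG_adj]
  constructor
  · intro h
    obtain ⟨h1, -⟩ := tv_inj (show tv i' j' hi' hj' = tv i j hi hj from h); omega
  · right
    simp only [vt, tv, gadgetRel]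
    refine ⟨by trivial, ?_, ?_⟩ <;> simpa

/-- SubV i j: descendants of position (i,j) in tree 0. -/
def SubV (i j : ℕ) : Set (GadgetV V m) :=
  {x | ∃ (i' j' : ℕ) (hi' : i' ≤ m) (hj' : j' < 2^i'),
    x = tv i' j' hi' hj' ∧ i ≤ i' ∧ j' / 2^(i' - i) = j}

lemma tv_mem_SubV {i j i' j' : ℕ} (hi' : i' ≤ m) (hj' : j' < 2^i')
    (h1 : i ≤ i') (h2 : j' / 2^(i' - i) = j) : (tv i' j' hi' hj' : GadgetV V m) ∈ SubV i j :=
  ⟨i', j', hi', hj', rfl, h1, h2⟩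

lemma SubV_self (i j : ℕ) (hi : i ≤ m) (hj : j < 2^i) : (tv i j hi hj : GadgetV V m) ∈ SubV i j :=
  tv_mem_SubV hi hj le_rfl (by simp)

lemma SubV_step {i j jc : ℕ} (hc : jc / 2 = j) : (SubV (i+1) jc : Set (GadgetV V m)) ⊆ SubV i j := by
  rintro x ⟨i', j', hi', hj', rfl, h1, h2⟩
  refine ⟨i', j', hi', hj', rfl, by omega, ?_⟩
  have hexp : i' - i = (i' - (i+1)) + 1 := by omega
  rw [hexp, ← div_div_pow, h2]
  simpa using hc

/-- walk from any vertex of the subtree up to the root, staying inside the subtree -/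
lemma walk_to_root (i j : ℕ) (hi : i ≤ m) (hj : j < 2^i) :
    ∀ (n i' j' : ℕ) (hi' : i' ≤ m) (hj' : j' < 2^i'), i' - i ≤ n → i ≤ i' →
      j' / 2^(i' - i) = j →
    ∃ p : (HG G e D).Walk (vt D i' j' hi' hj') (vt D i j hi hj),
      ∀ z ∈ p.support, (z : GadgetV V m) ∈ SubV i j := by
  intro n
  induction n with
  | zero =>
    intro i' j' hi' hj' hn hle hanc
    have : i' = i := by omega
    subst this
    have : j' = j := by simpa using hanc
    subst this
    exact ⟨SimpleGraph.Walk.nil, by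
      intro z hz
      simp only [SimpleGraph.Walk.support_nil, List.mem_singleton] at hz
      subst hz
      exact SubV_self _ _ hi' hj'⟩
  | succ n ih =>
    intro i' j' hi' hj' hn hle hanc
    rcases Nat.eq_or_lt_of_le hle with heq | hlt
    · subst heq
      have : j' = j := by simpa using hanc
      subst this
      exact ⟨SimpleGraph.Walk.nil, by
        intro z hz
        simp only [SimpleGraph.Walk.support_nil, List.mem_singleton] at hz
        subst hz
        exact SubV_self _ _ hi' hj'⟩
    · -- go to parent
      have hi'' : i' - 1 ≤ m := by omega
      have hj'' : j' / 2 < 2^(i'-1) := by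
        have h2 : (2:ℕ)^i' = 2^(i'-1) * 2 := by
          rw [← pow_succ]; congr 1; omega
        have hj2 : j' < 2^(i'-1) * 2 := h2 ▸ hj'
        omega
      have hanc' : (j' / 2) / 2^(i' - 1 - i) = j := by
        have hexp : 1 + (i' - 1 - i) = i' - i := by omega
        rw [show j' / 2 = j' / 2^1 by norm_num, div_div_pow, hexp]
        exact hanc
      obtain ⟨p, hp⟩ := ih (i'-1) (j'/2) hi'' hj'' (by omega) (by omega) hanc'
      have hadj := adj_parent G e D hi'' hj'' hi' hj' (by omega) rfl
      refine ⟨SimpleGraph.Walk.cons hadj p, ?_⟩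
      intro z hz
      rw [SimpleGraph.Walk.support_cons, List.mem_cons] at hz
      rcases hz with rfl | hz
      · exact tv_mem_SubV hi' hj' hle hanc
      · exact hp z hz

/-- existence of a bottom element of a finite connected set in a TD decomposition -/
lemma exists_bot {α : Type*} {Gr : SimpleGraph α} (T : TDDecomp Gr) {S : Set α}
    (hfin : S.Finite) (hne : S.Nonempty)
    (hconn : ∀ x ∈ S, ∀ y ∈ S, ∃ p : Gr.Walk x y, ∀ z ∈ p.support, z ∈ S) :
    ∃ x ∈ S, ∀ y ∈ S, T.le x y := by
  letI : Preorder α := { le := T.le, le_refl := T.le_refl, le_trans := T.le_trans }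
  obtain ⟨x, hxS, hmin⟩ := Finset.exists_minimal (s := hfin.toFinset) (by simpa using hne)
  rw [Set.Finite.mem_toFinset] at hxS
  refine ⟨x, hxS, ?_⟩
  have key : ∀ (a b : α) (p : Gr.Walk a b), (∀ z ∈ p.support, z ∈ S) → T.le x a → T.le x b := by
    intro a b p
    induction p with
    | nil => intro _ h; exact h
    | @cons u v w huv q ih =>
      intro hsup hxa
      have hvS : v ∈ S := hsup v (by
        rw [SimpleGraph.Walk.support_cons]
        exact List.mem_cons_of_mem _ q.start_mem_support)
      have hxv : T.le x v := by
        rcases T.adj_comparable u v huv with h | h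
        · exact T.le_trans _ _ _ hxa h
        · rcases T.down_linear u x v hxa h with h2 | h2
          · exact h2
          · exact hmin (show v ∈ hfin.toFinset by rwa [Set.Finite.mem_toFinset]) h2
      exact ih (fun z hz => hsup z (by rw [SimpleGraph.Walk.support_cons]; exact List.mem_cons_of_mem _ hz)) hxv
  intro y hyS
  obtain ⟨p, hp⟩ := hconn x hxS y hyS
  exact key x y p hp (T.le_refl x)

/-- target sum -/
def tgt (mm β i : ℕ) : ℕ := ∑ x ∈ Finset.range (mm + 1 - i), (β + 3 * (i + x))

lemma tgt_last (β : ℕ) : tgt m β m = β + 3 * m := by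
  simp [tgt]

lemma tgt_step (β i : ℕ) (h : i < m) :
    tgt m β i = (β + 3 * i) + tgt m β (i+1) := by
  unfold tgt
  have h1 : m + 1 - i = (m - i) + 1 := by omega
  have h2 : m + 1 - (i + 1) = m - i := by omega
  rw [h1, h2, Finset.sum_range_succ' (fun x => β + 3 * (i + x)) (m - i)]
  simp only [add_zero]
  rw [add_comm]
  congr 1
  apply Finset.sum_congr rfl
  intro x _
  ring


lemma conn_of_walks {α : Type*} {Gr : SimpleGraph α} {S : Set α} {r : α}
    (hr : ∀ x ∈ S, ∃ p : Gr.Walk x r, ∀ z ∈ p.support, z ∈ S) :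
    ∀ x ∈ S, ∀ y ∈ S, ∃ p : Gr.Walk x y, ∀ z ∈ p.support, z ∈ S := by
  intro x hx y hy
  obtain ⟨px, hpx⟩ := hr x hx
  obtain ⟨py, hpy⟩ := hr y hy
  refine ⟨px.append py.reverse, ?_⟩
  intro z hz
  rw [SimpleGraph.Walk.mem_support_append_iff] at hz
  rcases hz with h | h
  · exact hpx z h
  · rw [SimpleGraph.Walk.support_reverse, List.mem_reverse] at h
    exact hpy z h

lemma walk_any (i j : ℕ) (hi : i ≤ m) (hj : j < 2^i) (x : ↥(HSet D))
    (hx : (x : GadgetV V m) ∈ SubV i j) :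
    ∃ p : (HG G e D).Walk x (vt D i j hi hj), ∀ z ∈ p.support, (z : GadgetV V m) ∈ SubV i j := by
  obtain ⟨i', j', hi', hj', hval, h1, h2⟩ := hx
  have hxe : x = vt D i' j' hi' hj' := Subtype.ext hval
  subst hxe
  exact walk_to_root G e D i j hi hj (i' - i) i' j' hi' hj' le_rfl h1 h2

lemma dangle_ne_tv {c : GadgetV V m} {v : V} (hdv : c = .copy v 0 ∨ c = .guard v 0)
    (i j : ℕ) (hi : i ≤ m) (hj : j < 2^i) : c ≠ tv i j hi hj := by
  rcases hdv with rfl | rfl <;> simp [tv]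

lemma dangle_not_SubV {c : GadgetV V m} {v : V} (hdv : c = .copy v 0 ∨ c = .guard v 0)
    {i j : ℕ} : c ∉ SubV i j := by
  rintro ⟨i', j', hi', hj', hval, -, -⟩
  exact dangle_ne_tv hdv i' j' hi' hj' hval

lemma gadgetW_dangle_le {c : GadgetV V m} {v : V} (hdv : c = .copy v 0 ∨ c = .guard v 0)
    (β : ℕ) : gadgetW β c ≤ 2 := by
  rcases hdv with rfl | rfl <;> simp [gadgetW]

lemma adj_dangling (v : V) (d : ↥(HSet D))
    (hdv : (d : GadgetV V m) = .copy v 0 ∨ (d : GadgetV V m) = .guard v 0) :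
    (HG G e D).Adj d (vt D m (e v).val le_rfl (e v).isLt) := by
  rw [HG_adj]
  constructor
  · intro h
    exact dangle_ne_tv hdv m (e v).val le_rfl (e v).isLt h
  · left
    rcases hdv with h | h <;> rw [h] <;> simp [vt, tv, gadgetRel]

variable [Finite V]

lemma lower_none (β : ℕ) (T : TDDecomp (HG G e D)) :
    ∀ (n i j : ℕ), i ≤ m → j < 2^i → m - i ≤ n →
    ∃ C : Finset ↥(HSet D), (∀ c ∈ C, (c : GadgetV V m) ∈ SubV i j) ∧ T.IsChain C ∧
      tgt m β i ≤ ∑ x ∈ C, gadgetW β (x : GadgetV V m) := by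
  classical
  intro n
  induction n with
  | zero =>
    intro i j hi hj hn
    have him : i = m := by omega
    subst him
    refine ⟨{vt D i j hi hj}, ?_, ?_, ?_⟩
    · intro c hc
      rw [Finset.mem_singleton] at hc
      subst hc
      exact SubV_self i j hi hj
    · intro a ha b hb
      rw [Finset.mem_singleton] at ha hb
      subst ha; subst hb
      exact Or.inl (T.le_refl _)
    · rw [Finset.sum_singleton]
      show tgt i β i ≤ gadgetW β (tv i j hi hj)
      rw [gadgetW_tv, tgt_last]
  | succ n ih =>
    intro i j hi hj hn
    by_cases him : i = m
    · subst him
      refine ⟨{vt D i j hi hj}, ?_, ?_, ?_⟩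
      · intro c hc
        rw [Finset.mem_singleton] at hc
        subst hc
        exact SubV_self i j hi hj
      · intro a ha b hb
        rw [Finset.mem_singleton] at ha hb
        subst ha; subst hb
        exact Or.inl (T.le_refl _)
      · rw [Finset.sum_singleton]
        show tgt i β i ≤ gadgetW β (tv i j hi hj)
        rw [gadgetW_tv, tgt_last]
    · have hilt : i < m := by omega
      -- find a bottom element of the subtree
      set S : Set ↥(HSet D) := {a | (a : GadgetV V m) ∈ SubV i j} with hS
      have hne : S.Nonempty := ⟨vt D i j hi hj, SubV_self i j hi hj⟩
      have hconn := conn_of_walks (fun x hx => walk_any G e D i j hi hj x hx)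
      obtain ⟨x0, hx0S, hbot⟩ := exists_bot T (Set.toFinite S) hne hconn
      obtain ⟨dep, jp, hdep, hjp, hval, hdi, hanc⟩ := hx0S
      have h2i : (2:ℕ)^(i+1) = 2^i * 2 := pow_succ 2 i
      set jc := if i + 1 ≤ dep ∧ jp / 2^(dep-(i+1)) = 2*j then 2*j+1 else 2*j with hjcdef
      have hjc2 : jc / 2 = j ∧ jc < 2^(i+1) := by
        rw [hjcdef]; split_ifs <;> omega
      obtain ⟨C', hC'sub, hC'chain, hC'sum⟩ := ih (i+1) jc (by omega) hjc2.2 (by omega)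
      have hx0notin : (x0 : GadgetV V m) ∉ SubV (i+1) jc := by
        rintro ⟨i2, j2, hi2, hj2, hval2, hge2, hanc2⟩
        rw [hval] at hval2
        obtain ⟨hde, hje⟩ := tv_inj hval2
        subst hde; subst hje
        rw [hjcdef] at hanc2
        split_ifs at hanc2 with hsp
        · omega
        · simp only [not_and] at hsp
          have := hsp hge2
          omega
      have hx0C' : x0 ∉ C' := fun h => hx0notin (hC'sub x0 h)
      refine ⟨insert x0 C', ?_, ?_, ?_⟩
      · intro c hc
        rcases Finset.mem_insert.1 hc with rfl | hc'
        · exact ⟨dep, jp, hdep, hjp, hval, hdi, hanc⟩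
        · exact SubV_step hjc2.1 (hC'sub c hc')
      · intro a ha b hb
        rcases Finset.mem_insert.1 ha with rfl | ha' <;>
          rcases Finset.mem_insert.1 hb with rfl | hb'
        · exact Or.inl (T.le_refl _)
        · exact Or.inl (hbot b (SubV_step hjc2.1 (hC'sub b hb')))
        · exact Or.inr (hbot a (SubV_step hjc2.1 (hC'sub a ha')))
        · exact hC'chain a ha' b hb'
      · rw [Finset.sum_insert hx0C']
        have hw : gadgetW β (x0 : GadgetV V m) = β + 3 * dep := by rw [hval, gadgetW_tv]
        rw [hw, tgt_step β i hilt]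
        omega

lemma walk_any_dangle (i j : ℕ) (hi : i ≤ m) (hj : j < 2^i) (d : ↥(HSet D)) (v : V)
    (hdv : (d : GadgetV V m) = .copy v 0 ∨ (d : GadgetV V m) = .guard v 0)
    (hleaf : (e v).val / 2^(m-i) = j) :
    ∀ x ∈ {a : ↥(HSet D) | (a : GadgetV V m) ∈ SubV i j ∨ a = d},
      ∃ p : (HG G e D).Walk x (vt D i j hi hj),
        ∀ z ∈ p.support, z ∈ {a : ↥(HSet D) | (a : GadgetV V m) ∈ SubV i j ∨ a = d} := by
  intro x hx
  rcases hx with hx | rfl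
  · obtain ⟨p, hp⟩ := walk_any G e D i j hi hj x hx
    exact ⟨p, fun z hz => Or.inl (hp z hz)⟩
  · obtain ⟨p, hp⟩ := walk_any G e D i j hi hj (vt D m (e v).val le_rfl (e v).isLt)
      (tv_mem_SubV le_rfl (e v).isLt hi hleaf)
    refine ⟨SimpleGraph.Walk.cons (adj_dangling G e D v x hdv) p, ?_⟩
    intro z hz
    rw [SimpleGraph.Walk.support_cons, List.mem_cons] at hz
    rcases hz with rfl | hz
    · exact Or.inr rfl
    · exact Or.inl (hp z hz)

lemma SubV_at_m {j : ℕ} (hj : j < 2^m) {x : GadgetV V m} (hx : x ∈ SubV m j) :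
    x = tv m j le_rfl hj := by
  obtain ⟨i', j', hi', hj', rfl, h1, h2⟩ := hx
  have hieq : i' = m := by omega
  subst hieq
  simp only [Nat.sub_self, pow_zero, Nat.div_one] at h2
  subst h2
  rfl

lemma lower_some_base [Finite V] (β : ℕ) (T : TDDecomp (HG G e D)) (d : ↥(HSet D)) (v : V)
    (hdv : (d : GadgetV V m) = .copy v 0 ∨ (d : GadgetV V m) = .guard v 0)
    (j : ℕ) (hj : j < 2^m) (hleaf : (e v).val / 2^(m-m) = j) :
    ∃ C : Finset ↥(HSet D),
      (∀ c ∈ C, (c : GadgetV V m) ∈ SubV m j ∨ c = d) ∧ T.IsChain C ∧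
      tgt m β m + gadgetW β (d : GadgetV V m) ≤ ∑ x ∈ C, gadgetW β (x : GadgetV V m) := by
  classical
  set S : Set ↥(HSet D) := {a | (a : GadgetV V m) ∈ SubV m j ∨ a = d} with hS
  set lf : ↥(HSet D) := vt D m j le_rfl hj with hlf
  have hlfS : lf ∈ S := Or.inl (SubV_self m j le_rfl hj)
  have hdS : d ∈ S := Or.inr rfl
  have hconn := conn_of_walks (walk_any_dangle G e D m j le_rfl hj d v hdv hleaf)
  obtain ⟨x0, hx0S, hbot⟩ := exists_bot T (Set.toFinite S) ⟨lf, hlfS⟩ hconn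
  have hlfd : lf ≠ d := by
    intro h
    exact dangle_ne_tv hdv m j le_rfl hj (by rw [← h]; rfl)
  have hcomp : T.le lf d ∨ T.le d lf := by
    rcases hx0S with hx | rfl
    · have : x0 = lf := Subtype.ext (SubV_at_m hj hx)
      subst this
      exact Or.inl (hbot d hdS)
    · exact Or.inr (hbot lf hlfS)
  refine ⟨insert lf {d}, ?_, ?_, ?_⟩
  · intro c hc
    rcases Finset.mem_insert.1 hc with rfl | hc'
    · exact Or.inl (SubV_self m j le_rfl hj)
    · rw [Finset.mem_singleton] at hc'
      exact Or.inr hc'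
  · intro a ha b hb
    rcases Finset.mem_insert.1 ha with rfl | ha' <;>
      rcases Finset.mem_insert.1 hb with rfl | hb'
    · exact Or.inl (T.le_refl _)
    · rw [Finset.mem_singleton] at hb'; subst hb'; exact hcomp
    · rw [Finset.mem_singleton] at ha'; subst ha'; exact hcomp.symm
    · rw [Finset.mem_singleton] at ha' hb'; subst ha'; subst hb'
      exact Or.inl (T.le_refl _)
  · rw [Finset.sum_insert (by simpa using hlfd), Finset.sum_singleton]
    have hw : gadgetW β (lf : GadgetV V m) = β + 3 * m := gadgetW_tv β m j le_rfl hj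
    rw [hw, tgt_last]

lemma lower_some [Finite V] (β : ℕ) (T : TDDecomp (HG G e D)) (d : ↥(HSet D)) (v : V)
    (hdv : (d : GadgetV V m) = .copy v 0 ∨ (d : GadgetV V m) = .guard v 0) :
    ∀ (n i j : ℕ), i ≤ m → j < 2^i → m - i ≤ n → (e v).val / 2^(m-i) = j →
    ∃ C : Finset ↥(HSet D),
      (∀ c ∈ C, (c : GadgetV V m) ∈ SubV i j ∨ c = d) ∧ T.IsChain C ∧
      tgt m β i + gadgetW β (d : GadgetV V m) ≤ ∑ x ∈ C, gadgetW β (x : GadgetV V m) := by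
  classical
  intro n
  induction n with
  | zero =>
    intro i j hi hj hn hleaf
    have him : i = m := by omega
    subst him
    exact lower_some_base G e D β T d v hdv j hj hleaf
  | succ n ih =>
    intro i j hi hj hn hleaf
    by_cases him : i = m
    · subst him
      exact lower_some_base G e D β T d v hdv j hj hleaf
    · have hilt : i < m := by omega
      set S : Set ↥(HSet D) := {a | (a : GadgetV V m) ∈ SubV i j ∨ a = d} with hS
      have hconn := conn_of_walks (walk_any_dangle G e D i j hi hj d v hdv hleaf)
      obtain ⟨x0, hx0S, hbot⟩ :=
        exists_bot T (Set.toFinite S) ⟨vt D i j hi hj, Or.inl (SubV_self i j hi hj)⟩ hconn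
      have hwd : gadgetW β (d : GadgetV V m) ≤ 2 := gadgetW_dangle_le hdv β
      rcases hx0S with hx0sub | rfl
      · -- bottom is a tree vertex
        obtain ⟨dep, jp, hdep, hjp, hval, hdi, hanc⟩ := hx0sub
        have hx0d : x0 ≠ d := by
          intro h
          rw [h] at hval
          exact dangle_ne_tv hdv dep jp hdep hjp hval
        set ql := (e v).val / 2^(m-(i+1)) with hqldef
        have hexp : m - (i+1) + 1 = m - i := by omega
        have hql2 : ql / 2 = j := by
          calc ql / 2 = (e v).val / 2^(m-(i+1)) / 2^1 := by rw [hqldef]; norm_num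
          _ = (e v).val / 2^(m-i) := by rw [div_div_pow, hexp]
          _ = j := hleaf
        have hqllt : ql < 2^(i+1) := div_pow_lt (e v).isLt (by omega)
        have h2i : (2:ℕ)^(i+1) = 2^i * 2 := pow_succ 2 i
        by_cases hcase : i + 1 ≤ dep ∧ jp / 2^(dep-(i+1)) = ql
        · -- bottom lies on the branch of the special leaf: use the other child
          set jc := if ql = 2*j then 2*j+1 else 2*j with hjcdef
          have hjc : jc / 2 = j ∧ jc < 2^(i+1) ∧ jc ≠ ql := by
            rw [hjcdef]; split_ifs <;> omega
          obtain ⟨C', hC'sub, hC'chain, hC'sum⟩ :=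
            lower_none G e D β T n (i+1) jc (by omega) hjc.2.1 (by omega)
          have hx0notin : (x0 : GadgetV V m) ∉ SubV (i+1) jc := by
            rintro ⟨i2, j2, hi2, hj2, hval2, hge2, hanc2⟩
            rw [hval] at hval2
            obtain ⟨hde, hje⟩ := tv_inj hval2
            subst hde; subst hje
            rw [hcase.2] at hanc2
            exact hjc.2.2 hanc2.symm
          have hx0C' : x0 ∉ C' := fun h => hx0notin (hC'sub x0 h)
          refine ⟨insert x0 C', ?_, ?_, ?_⟩
          · intro c hc
            rcases Finset.mem_insert.1 hc with rfl | hc'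
            · exact Or.inl ⟨dep, jp, hdep, hjp, hval, hdi, hanc⟩
            · exact Or.inl (SubV_step hjc.1 (hC'sub c hc'))
          · intro a ha b hb
            rcases Finset.mem_insert.1 ha with rfl | ha' <;>
              rcases Finset.mem_insert.1 hb with rfl | hb'
            · exact Or.inl (T.le_refl _)
            · exact Or.inl (hbot b (Or.inl (SubV_step hjc.1 (hC'sub b hb'))))
            · exact Or.inr (hbot a (Or.inl (SubV_step hjc.1 (hC'sub a ha'))))
            · exact hC'chain a ha' b hb'
          · rw [Finset.sum_insert hx0C']
            have hw : gadgetW β (x0 : GadgetV V m) = β + 3 * dep := by rw [hval, gadgetW_tv]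
            rw [hw, tgt_step β i hilt]
            have := hcase.1
            omega
        · -- bottom not on the special branch: recurse into the leaf's child with the dangler
          obtain ⟨C', hC'sub, hC'chain, hC'sum⟩ :=
            ih (i+1) ql (by omega) hqllt (by omega) hqldef.symm
          have hx0notin : ¬((x0 : GadgetV V m) ∈ SubV (i+1) ql ∨ x0 = d) := by
            rintro (⟨i2, j2, hi2, hj2, hval2, hge2, hanc2⟩ | h)
            · rw [hval] at hval2
              obtain ⟨hde, hje⟩ := tv_inj hval2
              subst hde; subst hje
              exact hcase ⟨hge2, hanc2⟩
            · exact hx0d h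
          have hx0C' : x0 ∉ C' := fun h => hx0notin (hC'sub x0 h)
          have hmemS : ∀ c ∈ C', c ∈ S := by
            intro c hc
            rcases hC'sub c hc with h | rfl
            · exact Or.inl (SubV_step hql2 h)
            · exact Or.inr rfl
          refine ⟨insert x0 C', ?_, ?_, ?_⟩
          · intro c hc
            rcases Finset.mem_insert.1 hc with rfl | hc'
            · exact Or.inl ⟨dep, jp, hdep, hjp, hval, hdi, hanc⟩
            · rcases hC'sub c hc' with h | rfl
              · exact Or.inl (SubV_step hql2 h)
              · exact Or.inr rfl
          · intro a ha b hb
            rcases Finset.mem_insert.1 ha with rfl | ha' <;>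
              rcases Finset.mem_insert.1 hb with rfl | hb'
            · exact Or.inl (T.le_refl _)
            · exact Or.inl (hbot b (hmemS b hb'))
            · exact Or.inr (hbot a (hmemS a ha'))
            · exact hC'chain a ha' b hb'
          · rw [Finset.sum_insert hx0C']
            have hw : gadgetW β (x0 : GadgetV V m) = β + 3 * dep := by rw [hval, gadgetW_tv]
            rw [hw, tgt_step β i hilt]
            omega
      · -- bottom is the dangler
        obtain ⟨C', hC'sub, hC'chain, hC'sum⟩ :=
          lower_none G e D β T (n+1) i j hi hj hn
        have hdC' : x0 ∉ C' := fun h => dangle_not_SubV hdv (hC'sub x0 h)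
        refine ⟨insert x0 C', ?_, ?_, ?_⟩
        · intro c hc
          rcases Finset.mem_insert.1 hc with rfl | hc'
          · exact Or.inr rfl
          · exact Or.inl (hC'sub c hc')
        · intro a ha b hb
          rcases Finset.mem_insert.1 ha with rfl | ha' <;>
            rcases Finset.mem_insert.1 hb with rfl | hb'
          · exact Or.inl (T.le_refl _)
          · exact Or.inl (hbot b (Or.inl (hC'sub b hb')))
          · exact Or.inr (hbot a (Or.inl (hC'sub a ha')))
          · exact hC'chain a ha' b hb'
        · rw [Finset.sum_insert hdC']
          omega


lemma fin_le (a : Fin (m+1)) : a.val ≤ m := Nat.lt_succ_iff.mp a.isLt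

def le0 (e : V ≃ Fin (2 ^ m)) : GadgetV V m → GadgetV V m → Prop
  | .tree _ a b, .tree _ a' b' => a.val ≤ a'.val ∧ b'.val / 2^(a'.val - a.val) = b.val
  | .tree _ a b, .copy v _ => (e v).val / 2^(m - a.val) = b.val
  | .tree _ a b, .guard v _ => (e v).val / 2^(m - a.val) = b.val
  | x, y => x = y

lemma tree_t_eq_zero (hD : D ⊆ {x | ∃ v : V, x = GadgetV.copy v 0 ∨ x = GadgetV.guard v 0})
    {t : Fin 3} {i : Fin (m+1)} {j : Fin (2^i.val)}
    (h : (GadgetV.tree t i j : GadgetV V m) ∈ HSet D) : t = 0 := by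
  rcases h with ⟨fi, fj, hh⟩ | hd
  · injection hh with h1 h2 h3
  · obtain ⟨v, hv | hv⟩ := hD hd <;> simp at hv

lemma mem_D_of_copy {u : V} {c : Fin 2} (h : (GadgetV.copy u c : GadgetV V m) ∈ HSet D) :
    GadgetV.copy u c ∈ D := by
  rcases h with ⟨fi, fj, hh⟩ | hd
  · simp at hh
  · exact hd

lemma mem_D_of_guard {u : V} {c : Fin 3} (h : (GadgetV.guard u c : GadgetV V m) ∈ HSet D) :
    GadgetV.guard u c ∈ D := by
  rcases h with ⟨fi, fj, hh⟩ | hd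
  · simp at hh
  · exact hd

def T0 (hD : D ⊆ {x | ∃ v : V, x = GadgetV.copy v 0 ∨ x = GadgetV.guard v 0})
    (hind : ∀ x ∈ D, ∀ y ∈ D, ¬ (gadget G e).Adj x y) :
    TDDecomp (HG G e D) where
  le a b := le0 e a.val b.val
  le_refl := by
    rintro ⟨xv, hx⟩
    cases xv <;> simp [le0, Nat.sub_self]
  le_antisymm := by
    rintro ⟨xv, hx⟩ ⟨yv, hy⟩ hxy hyx
    apply Subtype.ext
    show xv = yv
    cases xv with
    | copy u c =>
      cases yv with
      | copy v c' => exact hxy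
      | guard v c' => exact hxy
      | tree t a b => exact hxy
    | guard u c =>
      cases yv with
      | copy v c' => exact hxy
      | guard v c' => exact hxy
      | tree t a b => exact hxy
    | tree t a b =>
      cases yv with
      | copy v c => exact hyx.symm
      | guard v c => exact hyx.symm
      | tree t' a' b' =>
        have ht : t = 0 := tree_t_eq_zero D hD hx
        have ht' : t' = 0 := tree_t_eq_zero D hD hy
        subst ht; subst ht'
        simp only [le0] at hxy hyx
        obtain ⟨h1, h2⟩ := hxy
        obtain ⟨h3, h4⟩ := hyx
        have haa : a = a' := Fin.ext (le_antisymm h1 h3)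
        subst haa
        simp only [Nat.sub_self, pow_zero, Nat.div_one] at h2
        exact congrArg (fun bb => GadgetV.tree 0 a bb) (Fin.ext h2.symm)
  le_trans := by
    rintro ⟨xv, hx⟩ ⟨yv, hy⟩ ⟨zv, hz⟩ h1 h2
    show le0 e xv zv
    cases xv with
    | copy u c =>
      have h1' : GadgetV.copy u c = yv := h1
      subst h1'
      exact h2
    | guard u c =>
      have h1' : GadgetV.guard u c = yv := h1
      subst h1'
      exact h2
    | tree t a b =>
      cases yv with
      | copy v c =>
        have h2' : GadgetV.copy v c = zv := h2
        subst h2'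
        exact h1
      | guard v c =>
        have h2' : GadgetV.guard v c = zv := h2
        subst h2'
        exact h1
      | tree t' a' b' =>
        simp only [le0] at h1
        obtain ⟨h11, h12⟩ := h1
        cases zv with
        | copy v c =>
          have h2' : (e v).val / 2^(m - a'.val) = b'.val := h2
          show (e v).val / 2^(m - a.val) = b.val
          rw [← div_cascade (e v).val h11 (fin_le a'), h2', h12]
        | guard v c =>
          have h2' : (e v).val / 2^(m - a'.val) = b'.val := h2
          show (e v).val / 2^(m - a.val) = b.val
          rw [← div_cascade (e v).val h11 (fin_le a'), h2', h12]
        | tree t'' a'' b'' =>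
          simp only [le0] at h2 ⊢
          obtain ⟨h21, h22⟩ := h2
          refine ⟨le_trans h11 h21, ?_⟩
          rw [← div_cascade b''.val h11 h21, h22, h12]
  down_linear := by
    rintro ⟨xv, hx⟩ ⟨yv, hy⟩ ⟨zv, hz⟩ hyx hzx
    show le0 e yv zv ∨ le0 e zv yv
    cases xv with
    | copy u c =>
      cases yv with
      | copy v c' =>
        have h' : GadgetV.copy v c' = GadgetV.copy u c := hyx
        rw [h']
        right
        exact hzx
      | guard v c' =>
        have h' : GadgetV.guard v c' = GadgetV.copy u c := hyx
        rw [h']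
        right
        exact hzx
      | tree ty ay by' =>
        have hy' : (e u).val / 2^(m - ay.val) = by'.val := hyx
        cases zv with
        | copy w c' =>
          have h' : GadgetV.copy w c' = GadgetV.copy u c := hzx
          rw [h']
          left
          exact hyx
        | guard w c' =>
          have h' : GadgetV.guard w c' = GadgetV.copy u c := hzx
          rw [h']
          left
          exact hyx
        | tree tz az bz =>
          have hz' : (e u).val / 2^(m - az.val) = bz.val := hzx
          rcases le_total ay.val az.val with hle | hle
          · left
            refine ⟨hle, ?_⟩
            rw [← hz', div_cascade (e u).val hle (fin_le az), hy']
          · right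
            refine ⟨hle, ?_⟩
            rw [← hy', div_cascade (e u).val hle (fin_le ay), hz']
    | guard u c =>
      cases yv with
      | copy v c' =>
        have h' : GadgetV.copy v c' = GadgetV.guard u c := hyx
        rw [h']
        right
        exact hzx
      | guard v c' =>
        have h' : GadgetV.guard v c' = GadgetV.guard u c := hyx
        rw [h']
        right
        exact hzx
      | tree ty ay by' =>
        have hy' : (e u).val / 2^(m - ay.val) = by'.val := hyx
        cases zv with
        | copy w c' =>
          have h' : GadgetV.copy w c' = GadgetV.guard u c := hzx
          rw [h']
          left
          exact hyx
        | guard w c' =>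
          have h' : GadgetV.guard w c' = GadgetV.guard u c := hzx
          rw [h']
          left
          exact hyx
        | tree tz az bz =>
          have hz' : (e u).val / 2^(m - az.val) = bz.val := hzx
          rcases le_total ay.val az.val with hle | hle
          · left
            refine ⟨hle, ?_⟩
            rw [← hz', div_cascade (e u).val hle (fin_le az), hy']
          · right
            refine ⟨hle, ?_⟩
            rw [← hy', div_cascade (e u).val hle (fin_le ay), hz']
    | tree t a b =>
      cases yv with
      | copy v c' => exact absurd hyx (by simp [le0])
      | guard v c' => exact absurd hyx (by simp [le0])
      | tree ty ay by' =>
        obtain ⟨hy1, hy2⟩ : ay.val ≤ a.val ∧ b.val / 2^(a.val - ay.val) = by'.val := hyx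
        cases zv with
        | copy w c' => exact absurd hzx (by simp [le0])
        | guard w c' => exact absurd hzx (by simp [le0])
        | tree tz az bz =>
          obtain ⟨hz1, hz2⟩ : az.val ≤ a.val ∧ b.val / 2^(a.val - az.val) = bz.val := hzx
          rcases le_total ay.val az.val with hle | hle
          · left
            refine ⟨hle, ?_⟩
            rw [← hz2, div_cascade b.val hle hz1, hy2]
          · right
            refine ⟨hle, ?_⟩
            rw [← hy2, div_cascade b.val hle hy1, hz2]
  adj_comparable := by
    rintro ⟨uv, hu⟩ ⟨vv, hv⟩ hadj
    rw [HG_adj] at hadj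
    obtain ⟨hne, hrel⟩ := hadj
    show le0 e uv vv ∨ le0 e vv uv
    cases uv with
    | copy a ca =>
      have haD : GadgetV.copy a ca ∈ D := mem_D_of_copy D hu
      cases vv with
      | copy b cb =>
        exact absurd ((SimpleGraph.fromRel_adj _ _ _).2 ⟨hne, hrel⟩) (hind _ haD _ (mem_D_of_copy D hv))
      | guard b cb =>
        exact absurd ((SimpleGraph.fromRel_adj _ _ _).2 ⟨hne, hrel⟩) (hind _ haD _ (mem_D_of_guard D hv))
      | tree t i j =>
        rcases hrel with h | h
        · obtain ⟨-, hdm, hj⟩ := h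
          right
          show (e a).val / 2^(m - i.val) = j.val
          have h0 : m - i.val = 0 := by omega
          rw [h0, pow_zero, Nat.div_one]
          exact hj.symm
        · exact h.elim
    | guard a ca =>
      have haD : GadgetV.guard a ca ∈ D := mem_D_of_guard D hu
      cases vv with
      | copy b cb =>
        exact absurd ((SimpleGraph.fromRel_adj _ _ _).2 ⟨hne, hrel⟩) (hind _ haD _ (mem_D_of_copy D hv))
      | guard b cb =>
        exact absurd ((SimpleGraph.fromRel_adj _ _ _).2 ⟨hne, hrel⟩) (hind _ haD _ (mem_D_of_guard D hv))
      | tree t i j =>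
        rcases hrel with h | h
        · obtain ⟨-, hdm, hj⟩ := h
          right
          show (e a).val / 2^(m - i.val) = j.val
          have h0 : m - i.val = 0 := by omega
          rw [h0, pow_zero, Nat.div_one]
          exact hj.symm
        · exact h.elim
    | tree t i j =>
      cases vv with
      | copy b cb =>
        rcases hrel with h | h
        · exact h.elim
        · obtain ⟨-, hdm, hj⟩ := h
          left
          show (e b).val / 2^(m - i.val) = j.val
          have h0 : m - i.val = 0 := by omega
          rw [h0, pow_zero, Nat.div_one]
          exact hj.symm
      | guard b cb =>
        rcases hrel with h | h
        · exact h.elim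
        · obtain ⟨-, hdm, hj⟩ := h
          left
          show (e b).val / 2^(m - i.val) = j.val
          have h0 : m - i.val = 0 := by omega
          rw [h0, pow_zero, Nat.div_one]
          exact hj.symm
      | tree t' i' j' =>
        rcases hrel with h | h
        · obtain ⟨-, hstep, hpar⟩ := h
          left
          show i.val ≤ i'.val ∧ j'.val / 2^(i'.val - i.val) = j.val
          constructor
          · omega
          · have : i'.val - i.val = 1 := by omega
            rw [this, pow_one, hpar]
        · obtain ⟨-, hstep, hpar⟩ := h
          right
          show i'.val ≤ i.val ∧ j.val / 2^(i.val - i'.val) = j'.val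
          constructor
          · omega
          · have : i.val - i'.val = 1 := by omega
            rw [this, pow_one, hpar]


lemma le0_copy_left {e : V ≃ Fin (2 ^ m)} {u : V} {c : Fin 2} {y : GadgetV V m}
    (h : le0 e (.copy u c) y) : GadgetV.copy u c = y := by
  cases y <;> exact h

lemma le0_guard_left {e : V ≃ Fin (2 ^ m)} {u : V} {c : Fin 3} {y : GadgetV V m}
    (h : le0 e (.guard u c) y) : GadgetV.guard u c = y := by
  cases y <;> exact h

lemma memD_of_not_tree (c : ↥(HSet D))
    (h : ¬ ∃ (a : Fin (m+1)) (b : Fin (2^a.val)), (c : GadgetV V m) = .tree 0 a b) :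
    (c : GadgetV V m) ∈ D := by
  rcases c.2 with ⟨i, j, hh⟩ | hd
  · exact absurd ⟨i, j, hh⟩ h
  · exact hd

lemma bdd_image (β : ℕ) (hD : D ⊆ {x | ∃ v : V, x = GadgetV.copy v 0 ∨ x = GadgetV.guard v 0}) :
    BddAbove (gadgetW β '' D) := by
  refine ⟨2, ?_⟩
  rintro _ ⟨z, hz, rfl⟩
  obtain ⟨v, hv⟩ := hD hz
  exact gadgetW_dangle_le hv β

section UB

variable (hD : D ⊆ {x | ∃ v : V, x = GadgetV.copy v 0 ∨ x = GadgetV.guard v 0})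
  (hind : ∀ x ∈ D, ∀ y ∈ D, ¬ (gadget G e).Adj x y)

lemma chain_bound (β : ℕ) (C : Finset ↥(HSet D)) (hC : (T0 G e D hD hind).IsChain C) :
    ∑ x ∈ C, gadgetW β (x : GadgetV V m) ≤
      (∑ i ∈ Finset.range (m+1), (β + 3*i)) + sSup (gadgetW β '' D) := by
  classical
  set P : ↥(HSet D) → Prop :=
    fun c => ∃ (a : Fin (m+1)) (b : Fin (2^a.val)), (c : GadgetV V m) = .tree 0 a b with hP
  rw [← Finset.sum_filter_add_sum_filter_not C P]
  set dp : ↥(HSet D) → ℕ := fun c =>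
    match (c : GadgetV V m) with
    | .tree _ a _ => a.val
    | _ => 0 with hdp
  have hdpc : ∀ (c : ↥(HSet D)) (a : Fin (m+1)) (b : Fin (2^a.val)),
      (c : GadgetV V m) = .tree 0 a b → dp c = a.val := by
    intro c a b hc
    rw [hdp]
    simp only [hc]
  gcongr
  · -- tree part
    have hinj : ∀ x ∈ C.filter P, ∀ y ∈ C.filter P, dp x = dp y → x = y := by
      intro x hx y hy hdeq
      rw [Finset.mem_filter] at hx hy
      obtain ⟨ax, bx, hxv⟩ := hx.2
      obtain ⟨ay, by', hyv⟩ := hy.2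
      rw [hdpc x ax bx hxv, hdpc y ay by' hyv] at hdeq
      have haxy : ax = ay := Fin.ext hdeq
      subst haxy
      have hcomp := hC x hx.1 y hy.1
      have hbeq : bx = by' := by
        rcases hcomp with h | h
        · have hle : le0 e (x : GadgetV V m) (y : GadgetV V m) := h
          rw [hxv, hyv] at hle
          obtain ⟨-, h2⟩ := hle
          simp only [Nat.sub_self, pow_zero, Nat.div_one] at h2
          exact Fin.ext h2.symm
        · have hle : le0 e (y : GadgetV V m) (x : GadgetV V m) := h
          rw [hyv, hxv] at hle
          obtain ⟨-, h2⟩ := hle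
          simp only [Nat.sub_self, pow_zero, Nat.div_one] at h2
          exact Fin.ext h2
      subst hbeq
      exact Subtype.ext (by rw [hxv, hyv])
    calc ∑ x ∈ C.filter P, gadgetW β (x : GadgetV V m)
        = ∑ x ∈ C.filter P, (β + 3 * dp x) := by
          apply Finset.sum_congr rfl
          intro x hx
          rw [Finset.mem_filter] at hx
          obtain ⟨ax, bx, hxv⟩ := hx.2
          rw [hxv, hdpc x ax bx hxv]
          rfl
      _ = ∑ i ∈ (C.filter P).image dp, (β + 3 * i) := (Finset.sum_image (f := fun i => β + 3 * i) (g := dp) hinj).symm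
      _ ≤ ∑ i ∈ Finset.range (m+1), (β + 3*i) := by
          apply Finset.sum_le_sum_of_subset
          intro i hi
          rw [Finset.mem_image] at hi
          obtain ⟨x, hx, rfl⟩ := hi
          rw [Finset.mem_filter] at hx
          obtain ⟨ax, bx, hxv⟩ := hx.2
          rw [hdpc x ax bx hxv, Finset.mem_range]
          exact ax.isLt
  · -- dangling part
    rcases Finset.eq_empty_or_nonempty (C.filter fun a => ¬ P a) with he | ⟨a, ha⟩
    · rw [he, Finset.sum_empty]
      exact Nat.zero_le _
    · have haD : (a : GadgetV V m) ∈ D := by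
        rw [Finset.mem_filter] at ha
        exact memD_of_not_tree D a ha.2
      have hsingle : C.filter (fun a => ¬ P a) ⊆ {a} := by
        intro y hy
        have hyD : (y : GadgetV V m) ∈ D := by
          rw [Finset.mem_filter] at hy
          exact memD_of_not_tree D y hy.2
        rw [Finset.mem_singleton]
        rw [Finset.mem_filter] at hy ha
        have hcomp := hC y hy.1 a ha.1
        obtain ⟨v, hv⟩ := hD hyD
        obtain ⟨w, hw⟩ := hD haD
        rcases hcomp with h | h
        · apply Subtype.ext
          have hle : le0 e (y : GadgetV V m) (a : GadgetV V m) := h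
          rcases hv with hv | hv
          · rw [hv] at hle ⊢
            exact le0_copy_left hle
          · rw [hv] at hle ⊢
            exact le0_guard_left hle
        · apply Subtype.ext
          have hle : le0 e (a : GadgetV V m) (y : GadgetV V m) := h
          rcases hw with hw | hw
          · rw [hw] at hle
            exact (le0_copy_left hle).symm.trans hw.symm
          · rw [hw] at hle
            exact (le0_guard_left hle).symm.trans hw.symm
      calc ∑ x ∈ C.filter (fun a => ¬ P a), gadgetW β (x : GadgetV V m)
          ≤ ∑ x ∈ {a}, gadgetW β (x : GadgetV V m) :=
            Finset.sum_le_sum_of_subset hsingle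
        _ = gadgetW β (a : GadgetV V m) := Finset.sum_singleton _ _
        _ ≤ sSup (gadgetW β '' D) :=
            le_csSup (bdd_image D β hD) ⟨a, haD, rfl⟩

lemma chain_attain (β : ℕ) :
    ∃ C : Finset ↥(HSet D), (T0 G e D hD hind).IsChain C ∧
      ∑ x ∈ C, gadgetW β (x : GadgetV V m) =
        (∑ i ∈ Finset.range (m+1), (β + 3*i)) + sSup (gadgetW β '' D) := by
  classical
  rcases Set.eq_empty_or_nonempty D with hDe | hDne
  · -- empty D : the path to leaf 0
    have hzlt : ∀ i : Fin (m+1), (0:ℕ) < 2^i.val := fun i => Nat.pow_pos two_pos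
    set f : Fin (m+1) → ↥(HSet D) := fun i => vt D i.val 0 (fin_le i) (hzlt i) with hf
    have hfinj : ∀ x ∈ (Finset.univ : Finset (Fin (m+1))), ∀ y ∈ Finset.univ, f x = f y → x = y := by
      intro x _ y _ hxy
      have h0 := congrArg Subtype.val hxy
      obtain ⟨h1, -⟩ := tv_inj' x.val 0 y.val 0 (fin_le x) (hzlt x) (fin_le y) (hzlt y) h0
      exact Fin.ext h1
    refine ⟨Finset.image f Finset.univ, ?_, ?_⟩
    · intro x hx y hy
      rw [Finset.mem_image] at hx hy
      obtain ⟨ix, -, rfl⟩ := hx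
      obtain ⟨iy, -, rfl⟩ := hy
      rcases le_total ix.val iy.val with h | h
      · left
        show le0 e (tv ix.val 0 (fin_le ix) (hzlt ix)) (tv iy.val 0 (fin_le iy) (hzlt iy))
        exact ⟨h, by simp [tv]⟩
      · right
        show le0 e (tv iy.val 0 (fin_le iy) (hzlt iy)) (tv ix.val 0 (fin_le ix) (hzlt ix))
        exact ⟨h, by simp [tv]⟩
    · have hsup0 : sSup (gadgetW β '' D) = 0 := by
        rw [hDe, Set.image_empty]
        exact csSup_empty
      rw [Finset.sum_image hfinj, hsup0, add_zero]
      have : ∀ i : Fin (m+1), gadgetW β ((f i : GadgetV V m)) = β + 3 * i.val := by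
        intro i
        exact gadgetW_tv β i.val 0 (fin_le i) (hzlt i)
      rw [Finset.sum_congr rfl (fun i _ => this i)]
      exact Fin.sum_univ_eq_sum_range (fun i => β + 3 * i) (m+1)
  · -- nonempty D : path to the leaf of the heaviest dangler, plus the dangler
    have hfin : (gadgetW β '' D).Finite := (Set.toFinite D).image _
    have hmem := (hDne.image (gadgetW β)).csSup_mem hfin
    obtain ⟨dv, hdvD, hdw⟩ := hmem
    obtain ⟨v, hv⟩ := hD hdvD
    set dS : ↥(HSet D) := ⟨dv, Or.inr hdvD⟩ with hdS
    set f : Fin (m+1) → ↥(HSet D) := fun i =>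
      vt D i.val ((e v).val / 2^(m - i.val)) (fin_le i) (div_pow_lt (e v).isLt (fin_le i)) with hf
    have hfinj : ∀ x ∈ (Finset.univ : Finset (Fin (m+1))), ∀ y ∈ Finset.univ, f x = f y → x = y := by
      intro x _ y _ hxy
      have h0 := congrArg Subtype.val hxy
      obtain ⟨h1, -⟩ := tv_inj' x.val ((e v).val / 2^(m - x.val)) y.val ((e v).val / 2^(m - y.val))
        (fin_le x) (div_pow_lt (e v).isLt (fin_le x)) (fin_le y) (div_pow_lt (e v).isLt (fin_le y)) h0
      exact Fin.ext h1
    have hdnotin : dS ∉ Finset.image f Finset.univ := by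
      rw [Finset.mem_image]
      rintro ⟨i, -, hi⟩
      have := congrArg Subtype.val hi
      exact dangle_ne_tv hv i.val ((e v).val / 2^(m - i.val)) (fin_le i)
        (div_pow_lt (e v).isLt (fin_le i)) this.symm
    have hled : ∀ i : Fin (m+1), le0 e ((f i : GadgetV V m)) dv := by
      intro i
      rcases hv with hv | hv
      · rw [hv]
        show (e v).val / 2^(m - i.val) = ((e v).val / 2^(m - i.val))
        rfl
      · rw [hv]
        show (e v).val / 2^(m - i.val) = ((e v).val / 2^(m - i.val))
        rfl
    refine ⟨insert dS (Finset.image f Finset.univ), ?_, ?_⟩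
    · intro x hx y hy
      rcases Finset.mem_insert.1 hx with rfl | hx' <;>
        rcases Finset.mem_insert.1 hy with rfl | hy'
      · exact Or.inl ((T0 G e D hD hind).le_refl _)
      · rw [Finset.mem_image] at hy'
        obtain ⟨iy, -, rfl⟩ := hy'
        exact Or.inr (hled iy)
      · rw [Finset.mem_image] at hx'
        obtain ⟨ix, -, rfl⟩ := hx'
        exact Or.inl (hled ix)
      · rw [Finset.mem_image] at hx' hy'
        obtain ⟨ix, -, rfl⟩ := hx'
        obtain ⟨iy, -, rfl⟩ := hy'
        rcases le_total ix.val iy.val with h | h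
        · left
          refine ⟨h, ?_⟩
          show (e v).val / 2^(m - iy.val) / 2^(iy.val - ix.val) = (e v).val / 2^(m - ix.val)
          exact div_cascade (e v).val h (fin_le iy)
        · right
          refine ⟨h, ?_⟩
          show (e v).val / 2^(m - ix.val) / 2^(ix.val - iy.val) = (e v).val / 2^(m - iy.val)
          exact div_cascade (e v).val h (fin_le ix)
    · rw [Finset.sum_insert hdnotin, Finset.sum_image hfinj]
      have hws : ∀ i : Fin (m+1), gadgetW β ((f i : GadgetV V m)) = β + 3 * i.val := by
        intro i
        exact gadgetW_tv β i.val _ (fin_le i) _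
      rw [Finset.sum_congr rfl (fun i _ => hws i),
        Fin.sum_univ_eq_sum_range (fun i => β + 3 * i) (m+1), hdw]
      omega

lemma T0_depth (β : ℕ) :
    (T0 G e D hD hind).weightedDepth (fun x => gadgetW β x.1) =
      (∑ i ∈ Finset.range (m+1), (β + 3*i)) + sSup (gadgetW β '' D) := by
  apply IsGreatest.csSup_eq
  constructor
  · obtain ⟨C, hC, hsum⟩ := chain_attain G e D hD hind β
    exact ⟨C, hC, hsum.symm⟩
  · rintro s ⟨C, hC, rfl⟩
    exact chain_bound G e D hD hind β C hC

include hD in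
lemma depth_lb (β : ℕ) (hm : 1 ≤ m) (T : TDDecomp (HG G e D)) :
    (∑ i ∈ Finset.range (m+1), (β + 3*i)) + sSup (gadgetW β '' D) ≤
      T.weightedDepth (fun x => gadgetW β x.1) := by
  classical
  have htgt0 : tgt m β 0 = ∑ i ∈ Finset.range (m+1), (β + 3*i) := by
    simp [tgt]
  have hbdd : BddAbove {s | ∃ C : Finset ↥(HSet D), T.IsChain C ∧
      s = C.sum (fun x => gadgetW β x.1)} := by
    haveI : Fintype ↥(HSet D) := Fintype.ofFinite _
    refine ⟨∑ x ∈ (Finset.univ : Finset ↥(HSet D)), gadgetW β (x : GadgetV V m), ?_⟩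
    rintro s ⟨C, -, rfl⟩
    exact Finset.sum_le_sum_of_subset (Finset.subset_univ C)
  obtain ⟨C, hC, hsum⟩ : ∃ C : Finset ↥(HSet D), T.IsChain C ∧
      (∑ i ∈ Finset.range (m+1), (β + 3*i)) + sSup (gadgetW β '' D) ≤
        ∑ x ∈ C, gadgetW β (x : GadgetV V m) := by
    rcases Set.eq_empty_or_nonempty D with hDe | hDne
    · obtain ⟨C, -, hCc, hCs⟩ := lower_none G e D β T m 0 0 (Nat.zero_le m)
        (Nat.pow_pos two_pos) (by omega)
      refine ⟨C, hCc, ?_⟩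
      have hsup0 : sSup (gadgetW β '' D) = 0 := by
        rw [hDe, Set.image_empty]
        exact csSup_empty
      rw [hsup0, add_zero, ← htgt0]
      exact hCs
    · have hfin : (gadgetW β '' D).Finite := (Set.toFinite D).image _
      obtain ⟨dv, hdvD, hdw⟩ := (hDne.image (gadgetW β)).csSup_mem hfin
      obtain ⟨v, hv⟩ := hD hdvD
      obtain ⟨C, -, hCc, hCs⟩ := lower_some G e D β T ⟨dv, Or.inr hdvD⟩ v hv m 0 0
        (Nat.zero_le m) (Nat.pow_pos two_pos) (by omega)
        (by simpa using Nat.div_eq_of_lt (e v).isLt)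
      refine ⟨C, hCc, ?_⟩
      rw [← hdw, ← htgt0]
      exact hCs
  calc (∑ i ∈ Finset.range (m+1), (β + 3*i)) + sSup (gadgetW β '' D)
      ≤ ∑ x ∈ C, gadgetW β (x : GadgetV V m) := hsum
    _ ≤ T.weightedDepth (fun x => gadgetW β x.1) := le_csSup hbdd ⟨C, hC, rfl⟩

end UB

end S14

/-- Let `H` be the subgraph of the gadget graph `G'` induced by
`V(T_1) ∪ D`, where the set `D` of dangling vertices consists of vertices of the form
`v_1` or `v_{g1}`. If no two dangling vertices are adjacent in `G'`, then
`wtd H = α + w*`, where `w*` is the maximum weight of a dangling vertex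
(`w* = 0` when `D = ∅`). -/
theorem stmt14 {V : Type*} [Fintype V] (G : SimpleGraph V) (m : ℕ) (hm : 1 ≤ m)
    (hcard : Fintype.card V = 2 ^ m) (e : V ≃ Fin (2 ^ m))
    (hdeg : ∀ v : V, (G.neighborSet v).ncard = 3)
    (k : ℕ) (hk1 : 1 < k) (hk2 : k < Fintype.card V - 1)
    (β α : ℕ)
    (hβ : β = 3 * Fintype.card V + k + 3)
    (hα : α = ∑ i ∈ Finset.range (m + 1), (β + 3 * i))
    (D : Set (GadgetV V m))
    (hD : D ⊆ {x | ∃ v : V, x = GadgetV.copy v 0 ∨ x = GadgetV.guard v 0})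
    (hind : ∀ x ∈ D, ∀ y ∈ D, ¬ (gadget G e).Adj x y) :
    wtd (SimpleGraph.induce
        ({x | ∃ (i : Fin (m + 1)) (j : Fin (2 ^ i.val)), x = GadgetV.tree 0 i j} ∪ D)
        (gadget G e))
      (fun x => gadgetW β x.1) = α + sSup (gadgetW β '' D) := by
  subst hα
  show wtd (S14.HG G e D) (fun x => gadgetW β x.1) =
    (∑ i ∈ Finset.range (m + 1), (β + 3 * i)) + sSup (gadgetW β '' D)
  unfold wtd
  apply le_antisymm
  · exact Nat.sInf_le ⟨S14.T0 G e D hD hind, (S14.T0_depth G e D hD hind β).symm⟩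
  · apply le_csInf
    · exact ⟨_, S14.T0 G e D hD hind, rfl⟩
    · rintro s ⟨T, rfl⟩
      exact S14.depth_lb G e D hD β hm T
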